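/- Let k ≥ 1 and p ≥ 2. There exists a constant c = c(k,p) > 0 such that for all z, η ∈ ℝ^k one has |V_p(z − η)| ≤ c |V_p(z) − V_p(η)|. -/

import Mathlib

noncomputable def Vp (p : ℝ) {E : Type*} [NormedAddCommGroup E] [NormedSpace ℝ E] (z : E) : E :=
  ((1 + ‖z‖ ^ 2) ^ ((p - 2) / 4)) • z

section Aux

variable {E : Type*} [NormedAddCommGroup E] [InnerProductSpace ℝ E]

lemma norm_Vp (p : ℝ) (w : E) : ‖Vp p w‖ = (1 + ‖w‖ ^ 2) ^ ((p - 2) / 4) * ‖w‖ := by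
  rw [Vp, norm_smul, Real.norm_eq_abs, abs_of_pos (Real.rpow_pos_of_pos (by positivity) _)]

lemma key_ineq (β a b s : ℝ) (hβ : 0 ≤ β) (hb : 0 ≤ b) (hba : b ≤ a) (hs : s ≤ a * b) :
    (1/2) * (1 + a ^ 2) ^ β * (a ^ 2 + b ^ 2 - 2 * s) ≤
      (1 + a ^ 2) ^ β * a ^ 2 + (1 + b ^ 2) ^ β * b ^ 2
        - ((1 + a ^ 2) ^ β + (1 + b ^ 2) ^ β) * s := by
  have h1 : (1 + b ^ 2 : ℝ) ^ β ≤ (1 + a ^ 2) ^ β := by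
    apply Real.rpow_le_rpow (by positivity) (by nlinarith) hβ
  have h2 : (0:ℝ) ≤ (1 + b ^ 2) ^ β := by positivity
  nlinarith [mul_nonneg (mul_nonneg (sub_nonneg.2 h1) hb) (sub_nonneg.2 hba),
    mul_nonneg (Real.rpow_nonneg (by positivity : (0:ℝ) ≤ 1 + a ^ 2) β) (sq_nonneg (a - b)),
    mul_nonneg h2 (sub_nonneg.2 hs)]

lemma inner_lower (p : ℝ) (hp : 2 ≤ p) (z η : E) (h : ‖η‖ ≤ ‖z‖) :
    (1/2) * (1 + ‖z‖ ^ 2) ^ ((p - 2) / 4) * ‖z - η‖ ^ 2 ≤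
      inner ℝ (Vp p z - Vp p η) (z - η) := by
  have hβ : 0 ≤ (p - 2) / 4 := by linarith
  have hs : inner ℝ z η ≤ ‖z‖ * ‖η‖ := real_inner_le_norm z η
  have hkey := key_ineq ((p - 2) / 4) ‖z‖ ‖η‖ (inner ℝ z η) hβ (norm_nonneg η) h hs
  have hnorm : ‖z - η‖ ^ 2 = ‖z‖ ^ 2 - 2 * inner ℝ z η + ‖η‖ ^ 2 := norm_sub_sq_real z η
  have hexp : (inner ℝ (Vp p z - Vp p η) (z - η) : ℝ)
      = (1 + ‖z‖ ^ 2) ^ ((p - 2) / 4) * ‖z‖ ^ 2 + (1 + ‖η‖ ^ 2) ^ ((p - 2) / 4) * ‖η‖ ^ 2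
        - ((1 + ‖z‖ ^ 2) ^ ((p - 2) / 4) + (1 + ‖η‖ ^ 2) ^ ((p - 2) / 4)) * inner ℝ z η := by
    rw [Vp, Vp, inner_sub_left, inner_sub_right, inner_sub_right,
      real_inner_smul_left, real_inner_smul_left, real_inner_smul_left, real_inner_smul_left,
      real_inner_self_eq_norm_sq, real_inner_self_eq_norm_sq, real_inner_comm η z]
    ring
  rw [hexp, hnorm]
  linarith [hkey]

lemma half_bound (p : ℝ) (hp : 2 ≤ p) (z η : E) (h : ‖η‖ ≤ ‖z‖) :
    ‖Vp p (z - η)‖ ≤ 2 * 4 ^ ((p - 2) / 4) * ‖Vp p z - Vp p η‖ := by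
  have hβ : 0 ≤ (p - 2) / 4 := by linarith
  set β := (p - 2) / 4 with hβdef
  by_cases hzη : z = η
  · subst hzη
    simp [norm_Vp]
  · have hd : 0 < ‖z - η‖ := by
      rw [norm_pos_iff]; exact sub_ne_zero.2 hzη
    have hG : (0:ℝ) < (1 + ‖z‖ ^ 2) ^ β := Real.rpow_pos_of_pos (by positivity) _
    -- lower bound on ‖Vp p z - Vp p η‖
    have hCS : (inner ℝ (Vp p z - Vp p η) (z - η) : ℝ) ≤ ‖Vp p z - Vp p η‖ * ‖z - η‖ :=
      real_inner_le_norm _ _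
    have hlow := inner_lower p hp z η h
    have hA : (1/2) * (1 + ‖z‖ ^ 2) ^ β * ‖z - η‖ ≤ ‖Vp p z - Vp p η‖ := by
      have := hlow.trans hCS
      rw [sq] at this
      have h' : ((1/2) * (1 + ‖z‖ ^ 2) ^ β * ‖z - η‖) * ‖z - η‖
          ≤ ‖Vp p z - Vp p η‖ * ‖z - η‖ := by linarith [this]
      exact le_of_mul_le_mul_right h' hd
    -- upper bound on ‖Vp p (z - η)‖
    have hsub : ‖z - η‖ ^ 2 ≤ 4 * ‖z‖ ^ 2 := by
      have h1 : ‖z - η‖ ≤ ‖z‖ + ‖η‖ := norm_sub_le z η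
      nlinarith [norm_nonneg (z - η), norm_nonneg z, norm_nonneg η]
    have hbase : (1 + ‖z - η‖ ^ 2 : ℝ) ≤ 4 * (1 + ‖z‖ ^ 2) := by nlinarith
    have hrp : (1 + ‖z - η‖ ^ 2 : ℝ) ^ β ≤ (4 : ℝ) ^ β * (1 + ‖z‖ ^ 2) ^ β := by
      rw [← Real.mul_rpow (by norm_num) (by positivity)]
      exact Real.rpow_le_rpow (by positivity) hbase hβ
    have h4 : (0:ℝ) < (4:ℝ) ^ β := Real.rpow_pos_of_pos (by norm_num) _
    calc ‖Vp p (z - η)‖ = (1 + ‖z - η‖ ^ 2) ^ β * ‖z - η‖ := norm_Vp p (z - η)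
      _ ≤ ((4:ℝ) ^ β * (1 + ‖z‖ ^ 2) ^ β) * ‖z - η‖ := by
          exact mul_le_mul_of_nonneg_right hrp (norm_nonneg _)
      _ = 2 * (4:ℝ) ^ β * ((1/2) * (1 + ‖z‖ ^ 2) ^ β * ‖z - η‖) := by ring
      _ ≤ 2 * (4:ℝ) ^ β * ‖Vp p z - Vp p η‖ := by
          exact mul_le_mul_of_nonneg_left hA (by positivity)

end Aux

theorem stmt_8 (k : ℕ) (hk : 1 ≤ k) (p : ℝ) (hp : 2 ≤ p) :
    ∃ c : ℝ, 0 < c ∧ ∀ z η : EuclideanSpace ℝ (Fin k),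
      ‖Vp p (z - η)‖ ≤ c * ‖Vp p z - Vp p η‖ := by
  refine ⟨2 * 4 ^ ((p - 2) / 4), by positivity, fun z η => ?_⟩
  rcases le_total ‖η‖ ‖z‖ with h | h
  · exact half_bound p hp z η h
  · have h1 := half_bound p hp η z h
    have e1 : ‖Vp p (z - η)‖ = ‖Vp p (η - z)‖ := by
      rw [norm_Vp, norm_Vp, norm_sub_rev]
    have e2 : ‖Vp p z - Vp p η‖ = ‖Vp p η - Vp p z‖ := (norm_sub_rev _ _)
    rw [e1, e2]; exact h1
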